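/- Let G be a graph on n ≥ 2 vertices, k ≥ 1 and ℓ ≥ 0 integers, and let G' with terminals s, t be the pair-copies graph of G. Then G contains a path P with at least two vertices such that |V(P)| ≤ k and |N_G(V(P))| ≤ ℓ if and only if G' contains an st-path P' with |V(P')| ≤ k + 2 and |N_{G'}(V(P'))| ≤ ℓ + 2(binom(n,2) − 1). -/

import Mathlib

open SimpleGraph

/-- The open neighborhood of a vertex set `S`: vertices outside `S` adjacent to some
vertex of `S`. -/
def openNbhd {V : Type*} (G : SimpleGraph V) (S : Set V) : Set V :=
  {v | v ∉ S ∧ ∃ w ∈ S, G.Adj v w}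

/-- The pair-copies graph `G'` of a graph `G` with a linear order on its vertices:
for every pair `v < w` of vertices of `G` there is a disjoint copy of `G`
(modelled as `Sum.inl (⟨(v, w), _⟩, a)` for `a : V`), together with two new
vertices `s = Sum.inr false` and `t = Sum.inr true`, where `s` is adjacent exactly
to the copy of `v` in each copy `G_{vw}`, and `t` is adjacent exactly to the copy
of `w` in each copy `G_{vw}`. -/
def pairCopies {V : Type*} [LinearOrder V] (G : SimpleGraph V) :
    SimpleGraph (({q : V × V // q.1 < q.2} × V) ⊕ Bool) :=
  SimpleGraph.fromRel (fun a b =>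
    match a, b with
    | Sum.inl (e, a), Sum.inl (e', b) => e = e' ∧ G.Adj a b
    | Sum.inr false, Sum.inl (e, a) => a = e.1.1
    | Sum.inr true, Sum.inl (e, a) => a = e.1.2
    | _, _ => False)

namespace PCAux

abbrev PIdx (V : Type*) [LinearOrder V] := {q : V × V // q.1 < q.2}

variable {V : Type*} [LinearOrder V] (G : SimpleGraph V)

lemma adj_inl_inl {e e' : PIdx V} {a b : V} :
    (pairCopies G).Adj (Sum.inl (e, a)) (Sum.inl (e', b)) ↔ e = e' ∧ G.Adj a b := by
  rw [pairCopies, fromRel_adj]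
  constructor
  · rintro ⟨-, h | h⟩
    · exact h
    · exact ⟨h.1.symm, h.2.symm⟩
  · rintro ⟨rfl, h⟩
    exact ⟨by simp [h.ne], Or.inl ⟨rfl, h⟩⟩

lemma adj_s_inl {e : PIdx V} {a : V} :
    (pairCopies G).Adj (Sum.inr false) (Sum.inl (e, a)) ↔ a = e.1.1 := by
  rw [pairCopies, fromRel_adj]
  constructor
  · rintro ⟨-, h | h⟩
    · exact h
    · exact h.elim
  · intro h
    exact ⟨by simp, Or.inl h⟩

lemma adj_t_inl {e : PIdx V} {a : V} :
    (pairCopies G).Adj (Sum.inr true) (Sum.inl (e, a)) ↔ a = e.1.2 := by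
  rw [pairCopies, fromRel_adj]
  constructor
  · rintro ⟨-, h | h⟩
    · exact h
    · exact h.elim
  · intro h
    exact ⟨by simp, Or.inl h⟩

lemma not_adj_s_t : ¬ (pairCopies G).Adj (Sum.inr false) (Sum.inr true) := by
  rw [pairCopies, fromRel_adj]
  rintro ⟨-, h | h⟩ <;> exact h

def inc (e : PIdx V) : G →g pairCopies G where
  toFun a := Sum.inl (e, a)
  map_rel' h := (adj_inl_inl G).2 ⟨rfl, h⟩

lemma inc_injective (e : PIdx V) : Function.Injective (inc G e) := by
  intro a b h
  exact congrArg Prod.snd (Sum.inl_injective h)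


variable {G}

def liftWalk (e : PIdx V) (w : G.Walk e.1.1 e.1.2) :
    (pairCopies G).Walk (Sum.inr false) (Sum.inr true) :=
  Walk.cons ((adj_s_inl G).2 rfl)
    ((w.map (inc G e)).concat (((adj_t_inl G).2 rfl).symm))

lemma support_liftWalk (e : PIdx V) (w : G.Walk e.1.1 e.1.2) :
    (liftWalk e w).support =
      Sum.inr false :: ((w.support.map fun a => Sum.inl (e, a)) ++ [Sum.inr true]) := by
  simp only [liftWalk, Walk.support_cons, Walk.support_concat, Walk.support_map,
    List.concat_eq_append]
  simp [liftWalk, inc]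

lemma length_support_liftWalk (e : PIdx V) (w : G.Walk e.1.1 e.1.2) :
    (liftWalk e w).support.length = w.support.length + 2 := by
  simp [support_liftWalk]

lemma mem_support_liftWalk {e : PIdx V} {w : G.Walk e.1.1 e.1.2} {x} :
    x ∈ (liftWalk e w).support ↔
      x = Sum.inr false ∨ x = Sum.inr true ∨ ∃ a ∈ w.support, x = Sum.inl (e, a) := by
  simp only [support_liftWalk, List.mem_cons, List.mem_append, List.mem_map,
    List.mem_singleton, List.not_mem_nil, or_false]
  constructor
  · rintro (rfl | ⟨a, ha, rfl⟩ | rfl)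
    · exact Or.inl rfl
    · exact Or.inr (Or.inr ⟨a, ha, rfl⟩)
    · exact Or.inr (Or.inl rfl)
  · rintro (rfl | rfl | ⟨a, ha, rfl⟩)
    · exact Or.inl rfl
    · exact Or.inr (Or.inr rfl)
    · exact Or.inr (Or.inl ⟨a, ha, rfl⟩)

lemma isPath_liftWalk_iff {e : PIdx V} {w : G.Walk e.1.1 e.1.2} :
    (liftWalk e w).IsPath ↔ w.IsPath := by
  rw [Walk.isPath_def, Walk.isPath_def, support_liftWalk]
  rw [List.nodup_cons, List.nodup_append]
  simp only [List.mem_append, List.mem_map, List.mem_singleton, List.nodup_singleton,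
    List.disjoint_singleton, List.nodup_map_iff (by intro a b h; exact congrArg Prod.snd (Sum.inl_injective h) : Function.Injective fun a : V => (Sum.inl (e, a) : (PIdx V × V) ⊕ Bool))]
  constructor
  · tauto
  · intro h
    refine ⟨?_, h, trivial, ?_⟩
    · rintro (⟨a, -, ha⟩ | hx) <;> simp_all
    · simp


lemma decomp (e : PIdx V) : ∀ (n : ℕ) (a : V)
    (q : (pairCopies G).Walk (Sum.inl (e, a)) (Sum.inr true)), q.length = n →
    q.support.Nodup → Sum.inr false ∉ q.support →
    ∃ w : G.Walk a e.1.2,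
      q = (w.map (inc G e)).concat (((adj_t_inl G).2 rfl).symm) := by
  intro n
  induction n using Nat.strong_induction_on with
  | _ n IH =>
    intro a q hlen hnd hs
    cases q with
    | @cons _ y _ h q' =>
      rcases y with ⟨e'', b⟩ | b
      · obtain ⟨rfl, hab⟩ := (adj_inl_inl G).1 h
        have hnd' : q'.support.Nodup := (List.nodup_cons.1 (by rwa [Walk.support_cons] at hnd)).2
        have hs' : Sum.inr false ∉ q'.support := fun hm => hs (by
          rw [Walk.support_cons]; exact List.mem_cons_of_mem _ hm)
        have hlt : q'.length < n := by
          rw [← hlen, Walk.length_cons]; omega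
        obtain ⟨w', rfl⟩ := IH q'.length hlt b q' rfl hnd' hs'
        exact ⟨Walk.cons hab w', rfl⟩
      · cases b
        · exact absurd (by
            rw [Walk.support_cons]; exact List.mem_cons_of_mem _ q'.start_mem_support) hs
        · have ha : a = e.1.2 := (adj_t_inl G).1 h.symm
          have hq' : q' = Walk.nil := (Walk.isPath_iff_eq_nil (p := q')).1 (by
            rw [Walk.isPath_def]
            exact (List.nodup_cons.1 (by rwa [Walk.support_cons] at hnd)).2)
          subst hq'
          subst ha
          exact ⟨Walk.nil, rfl⟩

lemma openNbhd_liftWalk (e : PIdx V) (w : G.Walk e.1.1 e.1.2) :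
    openNbhd (pairCopies G) {x | x ∈ (liftWalk e w).support} =
      Sum.inl '' (((fun a => (e, a)) '' openNbhd G {x | x ∈ w.support}) ∪
        {p : PIdx V × V | p.1 ≠ e ∧ (p.2 = p.1.1.1 ∨ p.2 = p.1.1.2)}) := by
  ext x
  rcases x with ⟨e', b⟩ | b
  · simp only [openNbhd, Set.mem_setOf_eq, mem_support_liftWalk, Set.mem_image,
      Set.mem_union]
    constructor
    · rintro ⟨hx, y, hy, hadj⟩
      rcases hy with rfl | rfl | ⟨c, hc, rfl⟩
      · have hb : b = e'.1.1 := (adj_s_inl G).1 hadj.symm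
        by_cases he : e' = e
        · subst he
          exact absurd (Or.inr (Or.inr ⟨e'.1.1, w.start_mem_support, by rw [hb]⟩)) hx
        · exact ⟨(e', b), Or.inr ⟨he, Or.inl hb⟩, rfl⟩
      · have hb : b = e'.1.2 := (adj_t_inl G).1 hadj.symm
        by_cases he : e' = e
        · subst he
          exact absurd (Or.inr (Or.inr ⟨e'.1.2, w.end_mem_support, by rw [hb]⟩)) hx
        · exact ⟨(e', b), Or.inr ⟨he, Or.inr hb⟩, rfl⟩
      · obtain ⟨rfl, hbc⟩ := (adj_inl_inl G).1 hadj
        refine ⟨(e', b), Or.inl ⟨b, ⟨?_, c, hc, hbc⟩, rfl⟩, rfl⟩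
        intro hbS
        exact hx (Or.inr (Or.inr ⟨b, hbS, rfl⟩))
    · rintro ⟨⟨e'', b'⟩, hmem, heq⟩
      rw [Sum.inl.injEq, Prod.mk.injEq] at heq
      obtain ⟨rfl, rfl⟩ := heq
      rcases hmem with ⟨a, haS, hpair⟩ | ⟨hne, hb⟩
      · cases hpair
        obtain ⟨hanot, c, hc, hadj⟩ := haS
        refine ⟨?_, Sum.inl (e, c), ?_, (adj_inl_inl G).2 ⟨rfl, hadj⟩⟩
        · rintro (h | h | ⟨a', ha', h⟩)
          · simp at h
          · simp at h
          · rw [Sum.inl.injEq, Prod.mk.injEq] at h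
            exact hanot (h.2 ▸ ha')
        · exact Or.inr (Or.inr ⟨c, hc, rfl⟩)
      · refine ⟨?_, ?_⟩
        · rintro (h | h | ⟨a', ha', h⟩)
          · simp at h
          · simp at h
          · rw [Sum.inl.injEq, Prod.mk.injEq] at h
            exact hne h.1
        · rcases hb with hb | hb
          · exact ⟨Sum.inr false, Or.inl rfl, ((adj_s_inl G).2 hb).symm⟩
          · exact ⟨Sum.inr true, Or.inr (Or.inl rfl), ((adj_t_inl G).2 hb).symm⟩
  · constructor
    · rintro ⟨hx, -⟩
      exfalso
      apply hx
      rw [Set.mem_setOf_eq, mem_support_liftWalk]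
      cases b
      · exact Or.inl rfl
      · exact Or.inr (Or.inl rfl)
    · rintro ⟨p, -, h⟩
      simp at h


lemma ncard_aux [Fintype V] (e : PIdx V) (S₀ : Set V) :
    ((Sum.inl '' (((fun a => ((e : PIdx V), a)) '' S₀) ∪
      {p : PIdx V × V | p.1 ≠ e ∧ (p.2 = p.1.1.1 ∨ p.2 = p.1.1.2)}) :
      Set ((PIdx V × V) ⊕ Bool))).ncard =
      S₀.ncard + 2 * (Fintype.card (PIdx V) - 1) := by
  classical
  rw [Set.ncard_image_of_injective _ Sum.inl_injective]
  rw [Set.ncard_union_eq ?hd (Set.toFinite _) (Set.toFinite _)]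
  case hd =>
    rw [Set.disjoint_left]
    rintro x ⟨a, -, rfl⟩ ⟨hne, -⟩
    exact hne rfl
  rw [Set.ncard_image_of_injective _
    (fun a b h => congrArg Prod.snd h : Function.Injective fun a : V => ((e : PIdx V), a))]
  congr 1
  have h2 : {p : PIdx V × V | p.1 ≠ e ∧ (p.2 = p.1.1.1 ∨ p.2 = p.1.1.2)} =
      ((fun e' : PIdx V => (e', e'.1.1)) '' {e}ᶜ) ∪
      ((fun e' : PIdx V => (e', e'.1.2)) '' {e}ᶜ) := by
    ext ⟨e', b⟩
    simp only [Set.mem_setOf_eq, Set.mem_union, Set.mem_image, Set.mem_compl_iff,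
      Set.mem_singleton_iff, Prod.mk.injEq]
    constructor
    · rintro ⟨hne, rfl | rfl⟩
      · exact Or.inl ⟨e', hne, rfl, rfl⟩
      · exact Or.inr ⟨e', hne, rfl, rfl⟩
    · rintro (⟨e'', hne, rfl, rfl⟩ | ⟨e'', hne, rfl, rfl⟩)
      · exact ⟨hne, Or.inl rfl⟩
      · exact ⟨hne, Or.inr rfl⟩
  rw [h2, Set.ncard_union_eq ?hd2 (Set.toFinite _) (Set.toFinite _)]
  case hd2 =>
    rw [Set.disjoint_left]
    rintro x ⟨a, -, rfl⟩ ⟨a', -, heq'⟩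
    obtain ⟨h1, h2⟩ := Prod.ext_iff.mp heq'
    cases h1
    exact a.2.ne' h2
  rw [Set.ncard_image_of_injective _
    (fun a b h => congrArg Prod.fst h : Function.Injective fun e' : PIdx V => (e', e'.1.1)),
    Set.ncard_image_of_injective _
    (fun a b h => congrArg Prod.fst h : Function.Injective fun e' : PIdx V => (e', e'.1.2))]
  have hc : ({e}ᶜ : Set (PIdx V)).ncard = Fintype.card (PIdx V) - 1 := by
    have h := Set.ncard_add_ncard_compl ({e} : Set (PIdx V))
    rw [Set.ncard_singleton, Nat.card_eq_fintype_card] at h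
    omega
  rw [hc]; ring

lemma card_pidx [Fintype V] : Fintype.card (PIdx V) = (Fintype.card V).choose 2 := by
  classical
  have h1 : Fintype.card (PIdx V) =
      (Finset.univ.filter fun q : V × V => q.1 < q.2).card :=
    Fintype.card_subtype _
  have hswap : (Finset.univ.filter fun q : V × V => q.2 < q.1).card =
      (Finset.univ.filter fun q : V × V => q.1 < q.2).card := by
    apply Finset.card_bij (fun q _ => Prod.swap q)
    · rintro ⟨a, b⟩ hq
      simp only [Finset.mem_filter, Finset.mem_univ, true_and] at hq ⊢
      exact hq
    · rintro ⟨a, b⟩ h1 ⟨c, d⟩ h2 h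
      simpa using congrArg Prod.swap h
    · rintro ⟨a, b⟩ hq
      refine ⟨(b, a), ?_, rfl⟩
      simp only [Finset.mem_filter, Finset.mem_univ, true_and] at hq ⊢
      exact hq
  have hoff : (Finset.univ : Finset V).offDiag.card =
      (Finset.univ.filter fun q : V × V => q.1 < q.2).card +
      (Finset.univ.filter fun q : V × V => q.2 < q.1).card := by
    rw [← Finset.card_union_of_disjoint (by
      rw [Finset.disjoint_left]
      rintro ⟨a, b⟩ h1 h2
      simp only [Finset.mem_filter, Finset.mem_univ, true_and] at h1 h2
      exact absurd h2 (lt_asymm h1))]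
    congr 1
    ext ⟨a, b⟩
    simp only [Finset.mem_offDiag, Finset.mem_union, Finset.mem_filter, Finset.mem_univ,
      true_and]
    exact ne_iff_lt_or_gt
  set n := Fintype.card V with hn'
  have hml : n * n - n = n * (n - 1) := by
    cases n with
    | zero => rfl
    | succ m => simp [Nat.mul_succ]
  rw [Finset.offDiag_card, Finset.card_univ, ← hn', hml] at hoff
  rw [Nat.choose_two_right, h1]
  set M := n * (n - 1)
  omega

end PCAux

/-- `G` contains a path `P` with at least two vertices such that `|V(P)| ≤ k` and
`|N_G(V(P))| ≤ ℓ` iff the pair-copies graph `G'` contains an `st`-path `P'` with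
`|V(P')| ≤ k + 2` and `|N_{G'}(V(P'))| ≤ ℓ + 2(binom(n,2) − 1)`. -/
theorem stmt_9 {V : Type*} [Fintype V] [LinearOrder V] (G : SimpleGraph V)
    (hn : 2 ≤ Fintype.card V) (k ℓ : ℕ) (hk : 1 ≤ k) :
    (∃ (u v : V) (p : G.Walk u v), p.IsPath ∧ 2 ≤ p.support.length ∧
        p.support.length ≤ k ∧ (openNbhd G {x | x ∈ p.support}).ncard ≤ ℓ) ↔
      (∃ p' : (pairCopies G).Walk (Sum.inr false) (Sum.inr true), p'.IsPath ∧
        p'.support.length ≤ k + 2 ∧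
        (openNbhd (pairCopies G) {x | x ∈ p'.support}).ncard ≤
          ℓ + 2 * ((Fintype.card V).choose 2 - 1)) := by
  classical
  constructor
  · rintro ⟨u, v, p, hp, h2, hk', hnb⟩
    have huv : u ≠ v := by
      rintro rfl
      rw [Walk.isPath_iff_eq_nil] at hp
      subst hp
      simp at h2
    have main : ∀ (e : PCAux.PIdx V) (w : G.Walk e.1.1 e.1.2), w.IsPath →
        w.support.length ≤ k → (openNbhd G {x | x ∈ w.support}).ncard ≤ ℓ →
        (∃ p' : (pairCopies G).Walk (Sum.inr false) (Sum.inr true), p'.IsPath ∧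
          p'.support.length ≤ k + 2 ∧
          (openNbhd (pairCopies G) {x | x ∈ p'.support}).ncard ≤
            ℓ + 2 * ((Fintype.card V).choose 2 - 1)) := by
      intro e w hw hwk hwn
      refine ⟨PCAux.liftWalk e w, PCAux.isPath_liftWalk_iff.2 hw, ?_, ?_⟩
      · rw [PCAux.length_support_liftWalk]; omega
      · rw [PCAux.openNbhd_liftWalk, PCAux.ncard_aux, PCAux.card_pidx]
        omega
    rcases huv.lt_or_gt with h | h
    · exact main ⟨(u, v), h⟩ p hp hk' hnb
    · refine main ⟨(v, u), h⟩ p.reverse hp.reverse ?_ ?_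
      · rwa [Walk.support_reverse, List.length_reverse]
      · have hset : {x | x ∈ p.reverse.support} = {x | x ∈ p.support} := by
          ext x; simp [Walk.support_reverse]
        rwa [hset]
  · rintro ⟨p', hp', hlen, hnb⟩
    cases p' with
    | @cons _ y _ h q =>
      rcases y with ⟨e, a⟩ | b
      · have ha : a = e.1.1 := (PCAux.adj_s_inl G).1 h
        subst ha
        have hnd : q.support.Nodup := by
          rw [← Walk.isPath_def]; exact hp'.of_cons
        have hsn : (Sum.inr false : (PCAux.PIdx V × V) ⊕ Bool) ∉ q.support := by
          have := hp'.support_nodup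
          rw [Walk.support_cons, List.nodup_cons] at this
          exact this.1
        obtain ⟨w, hq⟩ := PCAux.decomp (G := G) e q.length e.1.1 q rfl hnd hsn
        have hEq : Walk.cons h q = PCAux.liftWalk e w := by rw [hq]; rfl
        refine ⟨e.1.1, e.1.2, w, ?_, ?_, ?_, ?_⟩
        · exact PCAux.isPath_liftWalk_iff.1 (hEq ▸ hp')
        · rw [Walk.length_support]
          have hne : w.length ≠ 0 := fun h0 => e.2.ne (Walk.eq_of_length_eq_zero h0)
          omega
        · rw [hEq, PCAux.length_support_liftWalk] at hlen
          omega
        · rw [hEq, PCAux.openNbhd_liftWalk, PCAux.ncard_aux, PCAux.card_pidx] at hnb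
          omega
      · cases b
        · exact absurd h (SimpleGraph.irrefl _)
        · exact absurd h (PCAux.not_adj_s_t G)
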